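/- Let φ₁ : DihedralGroup 4 →* DihedralGroup 12 be the homomorphism induced by the additive map ZMod 4 → ZMod 12, i ↦ 3i, and φ₂ : DihedralGroup 4 →* DihedralGroup 8 the one induced by i ↦ 2i (both injective). Then there is a group isomorphism Ψ from the amalgamated free product (DihedralGroup 12) *_{DihedralGroup 4} (DihedralGroup 8) (the pushout of φ₁ and φ₂) onto GL⁺(2,ℤ) such that Ψ(ι₁(r 1)) = û, Ψ(ι₂(r 1)) = ŝ, and Ψ(ι₂(sr 0)) = r̂. (This is the decomposition GL⁺(2,ℤ) ≅ D₁₆ *_{D₈} D₂₄.) -/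

import Mathlib

/-- The three generators `û`, `ŝ`, `r̂` of the Pin⁺ cover of `GL(2,ℤ)`. -/
inductive GLGen
  | u | s | r

/-- The relators `ŝ⁸`, `r̂²`, `r̂ŝr̂⁻¹ŝ`, `r̂ûr̂⁻¹û`, `ŝ²û⁻³`. -/
def glRels : Set (FreeGroup GLGen) :=
  { (FreeGroup.of GLGen.s) ^ 8,
    (FreeGroup.of GLGen.r) ^ 2,
    FreeGroup.of GLGen.r * FreeGroup.of GLGen.s * (FreeGroup.of GLGen.r)⁻¹ * FreeGroup.of GLGen.s,
    FreeGroup.of GLGen.r * FreeGroup.of GLGen.u * (FreeGroup.of GLGen.r)⁻¹ * FreeGroup.of GLGen.u,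
    (FreeGroup.of GLGen.s) ^ 2 * ((FreeGroup.of GLGen.u) ^ 3)⁻¹ }

/-- The Pin⁺ cover `GL⁺(2,ℤ) = ⟨û, ŝ, r̂ ∣ ŝ⁸ = 1, r̂² = 1, r̂ŝr̂⁻¹ = ŝ⁻¹,
r̂ûr̂⁻¹ = û⁻¹, ŝ² = û³⟩` of `GL(2,ℤ)`. -/
abbrev GLplus : Type := PresentedGroup glRels

/-- The generator `û` of `GL⁺(2,ℤ)`. -/
def uhat : GLplus := PresentedGroup.of GLGen.u

/-- The generator `ŝ` of `GL⁺(2,ℤ)`. -/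
def shat : GLplus := PresentedGroup.of GLGen.s

/-- The generator `r̂` of `GL⁺(2,ℤ)`. -/
def rhat : GLplus := PresentedGroup.of GLGen.r

/-- The two factors `D₂₄ = DihedralGroup 12` (at `false`) and `D₁₆ = DihedralGroup 8`
(at `true`) of the amalgamated free product. -/
def Fac : Bool → Type
  | false => DihedralGroup 12
  | true => DihedralGroup 8

instance instFacGroup : ∀ b, Group (Fac b)
  | false => inferInstanceAs (Group (DihedralGroup 12))
  | true => inferInstanceAs (Group (DihedralGroup 8))

/-- The family of amalgamating maps `D₈ → D₂₄` and `D₈ → D₁₆`. -/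
def fam (φ₁ : DihedralGroup 4 →* DihedralGroup 12) (φ₂ : DihedralGroup 4 →* DihedralGroup 8) :
    ∀ b, DihedralGroup 4 →* Fac b
  | false => φ₁
  | true => φ₂

section DihedralAux

open DihedralGroup

variable {G : Type*} [Group G]

private lemma pow_val_add' {n : ℕ} [NeZero n] (a : G) (ha : a ^ n = 1) (i j : ZMod n) :
    a ^ (i + j).val = a ^ i.val * a ^ j.val := by
  rw [← pow_add]
  refine pow_eq_pow_iff_modEq.mpr (Nat.ModEq.of_dvd (orderOf_dvd_of_pow_eq_one ha) ?_)
  rw [ZMod.val_add]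
  exact Nat.mod_modEq _ _

private lemma pow_val_sub' {n : ℕ} [NeZero n] (a : G) (ha : a ^ n = 1) (i j : ZMod n) :
    a ^ (j - i).val = a ^ j.val * (a ^ i.val)⁻¹ := by
  have h := pow_val_add' a ha (j - i) i
  rw [sub_add_cancel] at h
  rw [eq_mul_inv_iff_mul_eq, ← h]

/-- Lift a pair `(a, b)` with `aⁿ = 1`, `b² = 1`, `bab⁻¹ = a⁻¹` to a homomorphism out of
the dihedral group of order `2n`. -/
private def dihedralLift {n : ℕ} [NeZero n] (a b : G) (ha : a ^ n = 1) (hb : b * b = 1)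
    (hc : b * a = a⁻¹ * b) : DihedralGroup n →* G :=
  have hck : ∀ k : ℕ, b * a ^ k = (a ^ k)⁻¹ * b := by
    intro k
    induction k with
    | zero => simp
    | succ k ih =>
      calc b * a ^ (k + 1) = (b * a ^ k) * a := by rw [pow_succ, mul_assoc]
        _ = (a ^ k)⁻¹ * (b * a) := by rw [ih, mul_assoc]
        _ = (a ^ (k + 1))⁻¹ * b := by rw [hc, pow_succ', mul_inv_rev, mul_assoc]
  have hck' : ∀ k : ℕ, a ^ k * b = b * (a ^ k)⁻¹ := by
    intro k
    calc a ^ k * b = a ^ k * (b * a ^ k) * (a ^ k)⁻¹ := by group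
      _ = a ^ k * ((a ^ k)⁻¹ * b) * (a ^ k)⁻¹ := by rw [hck]
      _ = b * (a ^ k)⁻¹ := by group
  have hcm : ∀ k l : ℕ, a ^ l * (a ^ k)⁻¹ = (a ^ k)⁻¹ * a ^ l := fun k l =>
    ((Commute.pow_pow_self a l k).inv_right).eq
  MonoidHom.mk'
    (fun x => match x with
      | DihedralGroup.r i => a ^ i.val
      | DihedralGroup.sr i => b * a ^ i.val)
    (by
      rintro (i | i) (j | j)
      · exact pow_val_add' a ha i j
      · show b * a ^ (j - i).val = a ^ i.val * (b * a ^ j.val)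
        rw [pow_val_sub' a ha i j]
        calc b * (a ^ j.val * (a ^ i.val)⁻¹)
            = b * ((a ^ i.val)⁻¹ * a ^ j.val) := by rw [hcm]
          _ = (b * (a ^ i.val)⁻¹) * a ^ j.val := by rw [mul_assoc]
          _ = (a ^ i.val * b) * a ^ j.val := by rw [← hck']
          _ = a ^ i.val * (b * a ^ j.val) := by rw [mul_assoc]
      · show b * a ^ (i + j).val = b * a ^ i.val * a ^ j.val
        rw [pow_val_add' a ha i j, mul_assoc]
      · show a ^ (j - i).val = b * a ^ i.val * (b * a ^ j.val)
        rw [pow_val_sub' a ha i j, hcm]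
        calc (a ^ i.val)⁻¹ * a ^ j.val
            = b * (b * (a ^ i.val)⁻¹) * a ^ j.val := by rw [← mul_assoc, hb, one_mul]
          _ = b * (a ^ i.val * b) * a ^ j.val := by rw [← hck']
          _ = b * a ^ i.val * (b * a ^ j.val) := by simp only [mul_assoc])

@[simp] private lemma dihedralLift_r {n : ℕ} [NeZero n] (a b : G) (ha : a ^ n = 1)
    (hb : b * b = 1) (hc : b * a = a⁻¹ * b) (i : ZMod n) :
    dihedralLift a b ha hb hc (DihedralGroup.r i) = a ^ i.val := rfl

@[simp] private lemma dihedralLift_sr {n : ℕ} [NeZero n] (a b : G) (ha : a ^ n = 1)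
    (hb : b * b = 1) (hc : b * a = a⁻¹ * b) (i : ZMod n) :
    dihedralLift a b ha hb hc (DihedralGroup.sr i) = b * a ^ i.val := rfl

private lemma dihedral_hom_ext {n : ℕ} [NeZero n] {f g : DihedralGroup n →* G}
    (h1 : f (DihedralGroup.r 1) = g (DihedralGroup.r 1))
    (h2 : f (DihedralGroup.sr 0) = g (DihedralGroup.sr 0)) : f = g := by
  have hr : ∀ i : ZMod n, f (DihedralGroup.r i) = g (DihedralGroup.r i) := by
    intro i
    have : (DihedralGroup.r i : DihedralGroup n) = (DihedralGroup.r 1) ^ i.val := by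
      rw [DihedralGroup.r_one_pow, ZMod.natCast_val, ZMod.cast_id]
    rw [this, map_pow, map_pow, h1]
  ext x
  cases x with
  | r i => exact hr i
  | sr i =>
    have : (DihedralGroup.sr i : DihedralGroup n) =
        DihedralGroup.sr 0 * DihedralGroup.r i := by
      rw [DihedralGroup.sr_mul_r, zero_add]
    rw [this, map_mul, map_mul, h2, hr]

end DihedralAux

section GLplusAux

private lemma glRel_eq_one {w : FreeGroup GLGen} (hw : w ∈ glRels) :
    PresentedGroup.mk glRels w = 1 := by
  have : w ∈ Subgroup.normalClosure glRels := Subgroup.subset_normalClosure hw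
  exact (QuotientGroup.eq_one_iff w).mpr this

private lemma shat_pow_eight : shat ^ 8 = 1 := by
  have h := glRel_eq_one (w := (FreeGroup.of GLGen.s) ^ 8) (by simp [glRels])
  rw [map_pow] at h
  exact h

private lemma rhat_sq : rhat * rhat = 1 := by
  have h := glRel_eq_one (w := (FreeGroup.of GLGen.r) ^ 2) (by simp [glRels])
  rw [map_pow] at h
  rw [pow_two] at h
  exact h

private lemma rhat_shat : rhat * shat = shat⁻¹ * rhat := by
  have h := glRel_eq_one (w := FreeGroup.of GLGen.r * FreeGroup.of GLGen.s *
      (FreeGroup.of GLGen.r)⁻¹ * FreeGroup.of GLGen.s) (by simp [glRels])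
  simp only [map_mul, map_inv] at h
  have h' : (rhat * shat * rhat⁻¹) * shat = 1 := h
  rw [mul_eq_one_iff_eq_inv] at h'
  rw [mul_inv_eq_iff_eq_mul] at h'
  rw [h']

private lemma rhat_uhat : rhat * uhat = uhat⁻¹ * rhat := by
  have h := glRel_eq_one (w := FreeGroup.of GLGen.r * FreeGroup.of GLGen.u *
      (FreeGroup.of GLGen.r)⁻¹ * FreeGroup.of GLGen.u) (by simp [glRels])
  simp only [map_mul, map_inv] at h
  have h' : (rhat * uhat * rhat⁻¹) * uhat = 1 := h
  rw [mul_eq_one_iff_eq_inv] at h'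
  rw [mul_inv_eq_iff_eq_mul] at h'
  rw [h']

private lemma shat_sq_eq_uhat_cube : shat ^ 2 = uhat ^ 3 := by
  have h := glRel_eq_one (w := (FreeGroup.of GLGen.s) ^ 2 *
      ((FreeGroup.of GLGen.u) ^ 3)⁻¹) (by simp [glRels])
  simp only [map_mul, map_inv, map_pow] at h
  exact mul_inv_eq_one.mp h

private lemma uhat_pow_twelve : uhat ^ 12 = 1 := by
  rw [show (12 : ℕ) = 3 * 4 from rfl, pow_mul, ← shat_sq_eq_uhat_cube, ← pow_mul]
  exact shat_pow_eight

/-- The homomorphism `D₂₄ → GL⁺(2,ℤ)`, `r i ↦ ûⁱ`, `sr i ↦ r̂ûⁱ`. -/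
private def gOne : DihedralGroup 12 →* GLplus :=
  dihedralLift uhat rhat uhat_pow_twelve rhat_sq rhat_uhat

/-- The homomorphism `D₁₆ → GL⁺(2,ℤ)`, `r i ↦ ŝⁱ`, `sr i ↦ r̂ŝⁱ`. -/
private def gTwo : DihedralGroup 8 →* GLplus :=
  dihedralLift shat rhat shat_pow_eight rhat_sq rhat_shat

private lemma gOne_r_one : gOne (DihedralGroup.r 1) = uhat := by
  show uhat ^ (1 : ZMod 12).val = uhat
  rw [show (1 : ZMod 12).val = 1 by decide, pow_one]

private lemma gTwo_r_one : gTwo (DihedralGroup.r 1) = shat := by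
  show shat ^ (1 : ZMod 8).val = shat
  rw [show (1 : ZMod 8).val = 1 by decide, pow_one]

private lemma gOne_sr_zero : gOne (DihedralGroup.sr 0) = rhat := by
  show rhat * uhat ^ (0 : ZMod 12).val = rhat
  simp

private lemma gTwo_sr_zero : gTwo (DihedralGroup.sr 0) = rhat := by
  show rhat * shat ^ (0 : ZMod 8).val = rhat
  simp

end GLplusAux

/-- `GL⁺(2,ℤ)` is the amalgamated free product `D₂₄ *_{D₈} D₁₆`, amalgamated along
the homomorphisms induced by the additive maps `ZMod 4 → ZMod 12, i ↦ 3i` and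
`ZMod 4 → ZMod 8, i ↦ 2i`, via an isomorphism sending `r 1` of `D₂₄` to `û`,
`r 1` of `D₁₆` to `ŝ`, and `sr 0` of `D₁₆` to `r̂`. -/
theorem glplus_is_amalgamated_product
    (f₁ : ZMod 4 →+ ZMod 12) (f₂ : ZMod 4 →+ ZMod 8)
    (hf₁ : f₁ 1 = 3) (hf₂ : f₂ 1 = 2)
    (φ₁ : DihedralGroup 4 →* DihedralGroup 12) (φ₂ : DihedralGroup 4 →* DihedralGroup 8)
    (hφ₁ : Function.Injective φ₁) (hφ₂ : Function.Injective φ₂)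
    (hφ₁r : ∀ i : ZMod 4, φ₁ (DihedralGroup.r i) = DihedralGroup.r (f₁ i))
    (hφ₁sr : ∀ i : ZMod 4, φ₁ (DihedralGroup.sr i) = DihedralGroup.sr (f₁ i))
    (hφ₂r : ∀ i : ZMod 4, φ₂ (DihedralGroup.r i) = DihedralGroup.r (f₂ i))
    (hφ₂sr : ∀ i : ZMod 4, φ₂ (DihedralGroup.sr i) = DihedralGroup.sr (f₂ i)) :
    ∃ Ψ : Monoid.PushoutI (fam φ₁ φ₂) ≃* GLplus,
      Ψ (Monoid.PushoutI.of (φ := fam φ₁ φ₂) false (DihedralGroup.r 1)) = uhat ∧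
      Ψ (Monoid.PushoutI.of (φ := fam φ₁ φ₂) true (DihedralGroup.r 1)) = shat ∧
      Ψ (Monoid.PushoutI.of (φ := fam φ₁ φ₂) true (DihedralGroup.sr 0)) = rhat := by
  classical
  set P := Monoid.PushoutI (fam φ₁ φ₂) with hP
  -- the family of maps to GLplus
  let gf : ∀ b, Fac b →* GLplus := fun b => match b with
    | false => gOne
    | true => gTwo
  have hcompat : ∀ b, (gf b).comp (fam φ₁ φ₂ b) = gTwo.comp φ₂ := by
    intro b
    cases b
    · show gOne.comp φ₁ = gTwo.comp φ₂
      apply dihedral_hom_ext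
      · show gOne (φ₁ (DihedralGroup.r 1)) = gTwo (φ₂ (DihedralGroup.r 1))
        rw [hφ₁r, hφ₂r, hf₁, hf₂]
        show uhat ^ (3 : ZMod 12).val = shat ^ (2 : ZMod 8).val
        have h3 : (3 : ZMod 12).val = 3 := by decide
        have h2 : (2 : ZMod 8).val = 2 := by decide
        rw [h3, h2, shat_sq_eq_uhat_cube]
      · show gOne (φ₁ (DihedralGroup.sr 0)) = gTwo (φ₂ (DihedralGroup.sr 0))
        rw [hφ₁sr, hφ₂sr, map_zero, map_zero, gOne_sr_zero, gTwo_sr_zero]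
    · rfl
  let F : P →* GLplus := Monoid.PushoutI.lift gf (gTwo.comp φ₂) hcompat
  -- the key amalgamation identities
  have key : Monoid.PushoutI.of (φ := fam φ₁ φ₂) true (DihedralGroup.sr 0) =
      Monoid.PushoutI.of (φ := fam φ₁ φ₂) false (DihedralGroup.sr 0) := by
    have h1 := Monoid.PushoutI.of_apply_eq_base (φ := fam φ₁ φ₂) true (DihedralGroup.sr 0)
    have h2 := Monoid.PushoutI.of_apply_eq_base (φ := fam φ₁ φ₂) false (DihedralGroup.sr 0)
    have e2 : (fam φ₁ φ₂ true) (DihedralGroup.sr 0) = DihedralGroup.sr 0 := by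
      show φ₂ (DihedralGroup.sr 0) = _
      rw [hφ₂sr, map_zero]
    have e1 : (fam φ₁ φ₂ false) (DihedralGroup.sr 0) = DihedralGroup.sr 0 := by
      show φ₁ (DihedralGroup.sr 0) = _
      rw [hφ₁sr, map_zero]
    rw [e2] at h1
    rw [e1] at h2
    rw [h1, h2]
  have key2 : Monoid.PushoutI.of (φ := fam φ₁ φ₂) true (DihedralGroup.r 2) =
      Monoid.PushoutI.of (φ := fam φ₁ φ₂) false (DihedralGroup.r 3) := by
    have h1 := Monoid.PushoutI.of_apply_eq_base (φ := fam φ₁ φ₂) true (DihedralGroup.r 1)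
    have h2 := Monoid.PushoutI.of_apply_eq_base (φ := fam φ₁ φ₂) false (DihedralGroup.r 1)
    have e2 : (fam φ₁ φ₂ true) (DihedralGroup.r 1) = DihedralGroup.r 2 := by
      show φ₂ (DihedralGroup.r 1) = _
      rw [hφ₂r, hf₂]
    have e1 : (fam φ₁ φ₂ false) (DihedralGroup.r 1) = DihedralGroup.r 3 := by
      show φ₁ (DihedralGroup.r 1) = _
      rw [hφ₁r, hf₁]
    rw [e2] at h1
    rw [e1] at h2
    rw [h1, h2]
  -- the map back
  let gen : GLGen → P := fun x => match x with
    | GLGen.u => Monoid.PushoutI.of (φ := fam φ₁ φ₂) false (DihedralGroup.r 1)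
    | GLGen.s => Monoid.PushoutI.of (φ := fam φ₁ φ₂) true (DihedralGroup.r 1)
    | GLGen.r => Monoid.PushoutI.of (φ := fam φ₁ φ₂) true (DihedralGroup.sr 0)
  have hrel : ∀ w ∈ glRels, FreeGroup.lift gen w = 1 := by
    intro w hw
    simp only [glRels, Set.mem_insert_iff, Set.mem_singleton_iff] at hw
    rcases hw with rfl | rfl | rfl | rfl | rfl
    · rw [map_pow, FreeGroup.lift_apply_of]
      show (Monoid.PushoutI.of (φ := fam φ₁ φ₂) true (DihedralGroup.r 1)) ^ 8 = 1
      erw [← map_pow, DihedralGroup.r_one_pow]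
      have : (DihedralGroup.r ((8 : ℕ) : ZMod 8) : DihedralGroup 8) = 1 := by decide
      erw [this, map_one]
    · rw [map_pow, FreeGroup.lift_apply_of]
      show (Monoid.PushoutI.of (φ := fam φ₁ φ₂) true (DihedralGroup.sr 0)) ^ 2 = 1
      erw [pow_two, ← map_mul]
      have : (DihedralGroup.sr 0 * DihedralGroup.sr 0 : DihedralGroup 8) = 1 := by decide
      erw [this, map_one]
    · simp only [map_mul, map_inv, FreeGroup.lift_apply_of]
      show Monoid.PushoutI.of (φ := fam φ₁ φ₂) true (DihedralGroup.sr 0) *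
          Monoid.PushoutI.of (φ := fam φ₁ φ₂) true (DihedralGroup.r 1) *
          (Monoid.PushoutI.of (φ := fam φ₁ φ₂) true (DihedralGroup.sr 0))⁻¹ *
          Monoid.PushoutI.of (φ := fam φ₁ φ₂) true (DihedralGroup.r 1) = 1
      erw [← map_inv, ← map_mul, ← map_mul, ← map_mul]
      have : (DihedralGroup.sr 0 * DihedralGroup.r 1 * (DihedralGroup.sr 0)⁻¹ *
          DihedralGroup.r 1 : DihedralGroup 8) = 1 := by decide
      erw [this, map_one]
    · simp only [map_mul, map_inv, FreeGroup.lift_apply_of]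
      show Monoid.PushoutI.of (φ := fam φ₁ φ₂) true (DihedralGroup.sr 0) *
          Monoid.PushoutI.of (φ := fam φ₁ φ₂) false (DihedralGroup.r 1) *
          (Monoid.PushoutI.of (φ := fam φ₁ φ₂) true (DihedralGroup.sr 0))⁻¹ *
          Monoid.PushoutI.of (φ := fam φ₁ φ₂) false (DihedralGroup.r 1) = 1
      erw [key, ← map_inv, ← map_mul, ← map_mul, ← map_mul]
      have : (DihedralGroup.sr 0 * DihedralGroup.r 1 * (DihedralGroup.sr 0)⁻¹ *
          DihedralGroup.r 1 : DihedralGroup 12) = 1 := by decide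
      erw [this, map_one]
    · simp only [map_mul, map_inv, map_pow, FreeGroup.lift_apply_of]
      show (Monoid.PushoutI.of (φ := fam φ₁ φ₂) true (DihedralGroup.r 1)) ^ 2 *
          ((Monoid.PushoutI.of (φ := fam φ₁ φ₂) false (DihedralGroup.r 1)) ^ 3)⁻¹ = 1
      erw [← map_pow, ← map_pow, DihedralGroup.r_one_pow, DihedralGroup.r_one_pow]
      have h2 : ((2 : ℕ) : ZMod 8) = 2 := by decide
      have h3 : ((3 : ℕ) : ZMod 12) = 3 := by decide
      rw [h2, h3, key2, mul_inv_cancel]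
  let Gm : GLplus →* P := PresentedGroup.toGroup hrel
  have hF_u : F (Monoid.PushoutI.of (φ := fam φ₁ φ₂) false (DihedralGroup.r 1)) = uhat := by
    erw [Monoid.PushoutI.lift_of]
    exact gOne_r_one
  have hF_s : F (Monoid.PushoutI.of (φ := fam φ₁ φ₂) true (DihedralGroup.r 1)) = shat := by
    erw [Monoid.PushoutI.lift_of]
    exact gTwo_r_one
  have hF_r : F (Monoid.PushoutI.of (φ := fam φ₁ φ₂) true (DihedralGroup.sr 0)) = rhat := by
    erw [Monoid.PushoutI.lift_of]
    exact gTwo_sr_zero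
  have hF_r' : F (Monoid.PushoutI.of (φ := fam φ₁ φ₂) false (DihedralGroup.sr 0)) = rhat := by
    erw [Monoid.PushoutI.lift_of]
    exact gOne_sr_zero
  have hGu : Gm uhat = gen GLGen.u := PresentedGroup.toGroup.of hrel
  have hGs : Gm shat = gen GLGen.s := PresentedGroup.toGroup.of hrel
  have hGr : Gm rhat = gen GLGen.r := PresentedGroup.toGroup.of hrel
  have hGF : Gm.comp F = MonoidHom.id P := by
    apply Monoid.PushoutI.hom_ext_nonempty
    intro b
    cases b
    · apply dihedral_hom_ext
      · show Gm (F (Monoid.PushoutI.of (φ := fam φ₁ φ₂) false (DihedralGroup.r 1))) =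
            Monoid.PushoutI.of (φ := fam φ₁ φ₂) false (DihedralGroup.r 1)
        rw [hF_u, hGu]
      · show Gm (F (Monoid.PushoutI.of (φ := fam φ₁ φ₂) false (DihedralGroup.sr 0))) =
            Monoid.PushoutI.of (φ := fam φ₁ φ₂) false (DihedralGroup.sr 0)
        rw [hF_r', hGr, ← key]
    · apply dihedral_hom_ext
      · show Gm (F (Monoid.PushoutI.of (φ := fam φ₁ φ₂) true (DihedralGroup.r 1))) =
            Monoid.PushoutI.of (φ := fam φ₁ φ₂) true (DihedralGroup.r 1)
        rw [hF_s, hGs]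
      · show Gm (F (Monoid.PushoutI.of (φ := fam φ₁ φ₂) true (DihedralGroup.sr 0))) =
            Monoid.PushoutI.of (φ := fam φ₁ φ₂) true (DihedralGroup.sr 0)
        rw [hF_r, hGr]
  have hFG : F.comp Gm = MonoidHom.id GLplus := by
    apply PresentedGroup.ext
    intro x
    cases x
    · show F (Gm uhat) = uhat
      rw [hGu]
      exact hF_u
    · show F (Gm shat) = shat
      rw [hGs]
      exact hF_s
    · show F (Gm rhat) = rhat
      rw [hGr]
      exact hF_r
  exact ⟨MonoidHom.toMulEquiv F Gm hGF hFG, hF_u, hF_s, hF_r⟩
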